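/- Let Δ be a d-complex balanced by a weighting w: Δ → R over a commutative ring R, and let S be a multiset with |S| ≤ d. Then the link Δ*_S = {σ : σ ⊎ S ∈ Δ} is a (d−|S|)-complex balanced by the weighting w*_S(σ) = w(σ ⊎ S)·m(σ ⊆ σ ⊎ S). -/

import Mathlib

open scoped BigOperators

/-- The multiplicity `m(T ⊆ σ) = ∏ i, C(σ i, T i)` of a multiset `T` in a multiset `σ`
on `{1, …, n}` (multisets encoded as functions `Fin n → ℕ`). -/
def mult {n : ℕ} (T σ : Fin n → ℕ) : ℕ := ∏ i, (σ i).choose (T i)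

lemma choose_coord (a s t : ℕ) (hs : s ≤ a) :
    a.choose (a - s) * (a - s).choose t = a.choose (s + t) * (s + t).choose s := by
  rw [Nat.choose_symm hs]
  by_cases h : s + t ≤ a
  · rw [Nat.choose_mul (Nat.le_add_right s t), Nat.add_sub_cancel_left]
  · have h1 : a < s + t := Nat.lt_of_not_le h
    rw [Nat.choose_eq_zero_of_lt h1, Nat.zero_mul,
      Nat.choose_eq_zero_of_lt (show a - s < t by omega), Nat.mul_zero]

/-- Let `Δ` be a `d`-complex balanced by a weighting `w : Δ → R` over a commutative
ring `R`, and `S` a multiset with `|S| = k ≤ d`. Then the link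
`Δ*_S = {σ : σ ⊎ S ∈ Δ}` is a `(d−k)`-complex balanced by the induced weighting
`w*_S(σ) = w(σ ⊎ S)·m(σ ⊆ σ ⊎ S)`. -/
theorem link_balanced (R : Type*) [CommRing R] {n d k : ℕ}
    (Δ : Finset (Fin n → ℕ)) (hcard : ∀ σ ∈ Δ, ∑ i, σ i = d + 1)
    (w : (Fin n → ℕ) → R)
    (hbal : ∀ T : Fin n → ℕ, ∑ i, T i ≤ d → ∑ σ ∈ Δ, w σ * (mult T σ : R) = 0)
    (S : Fin n → ℕ) (hS : ∑ i, S i = k) (hk : k ≤ d) :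
    ∀ T : Fin n → ℕ, ∑ i, T i ≤ d - k →
      ∑ σ ∈ (Δ.filter (fun τ => ∀ i, S i ≤ τ i)).image (fun τ => τ - S),
        (w (σ + S) * (mult σ (σ + S) : R)) * (mult T σ : R) = 0 := by
  intro T hT
  have hrest : ∀ τ ∈ Δ.filter (fun τ => ∀ i, S i ≤ τ i), (τ - S) + S = τ := by
    intro τ hτ
    have h := (Finset.mem_filter.mp hτ).2
    funext i
    simp [Nat.sub_add_cancel (h i)]
  rw [Finset.sum_image (by
    intro τ1 h1 τ2 h2 heq
    have := congrArg (· + S) heq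
    simpa [hrest τ1 h1, hrest τ2 h2] using this)]
  have key : ∀ τ ∈ Δ.filter (fun τ => ∀ i, S i ≤ τ i),
      (w ((τ - S) + S) * (mult (τ - S) ((τ - S) + S) : R)) * (mult T (τ - S) : R)
        = (w τ * (mult (S + T) τ : R)) * (mult S (S + T) : R) := by
    intro τ hτ
    have hle := (Finset.mem_filter.mp hτ).2
    rw [hrest τ hτ]
    have : mult (τ - S) τ * mult T (τ - S) = mult (S + T) τ * mult S (S + T) := by
      simp only [mult, ← Finset.prod_mul_distrib]
      refine Finset.prod_congr rfl fun i _ => ?_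
      simpa using choose_coord (τ i) (S i) (T i) (hle i)
    rw [mul_assoc, mul_assoc, ← Nat.cast_mul, ← Nat.cast_mul, this]
  rw [Finset.sum_congr rfl key, ← Finset.sum_mul]
  have hfull : ∑ τ ∈ Δ.filter (fun τ => ∀ i, S i ≤ τ i), w τ * (mult (S + T) τ : R)
      = ∑ τ ∈ Δ, w τ * (mult (S + T) τ : R) := by
    refine Finset.sum_filter_of_ne fun τ _ hne => ?_
    by_contra h
    push_neg at h
    obtain ⟨i, hi⟩ := h
    apply hne
    have : mult (S + T) τ = 0 := by
      apply Finset.prod_eq_zero (Finset.mem_univ i)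
      exact Nat.choose_eq_zero_of_lt (by simpa using by omega)
    simp [this]
  rw [hfull, hbal (S + T) (by simp only [Pi.add_apply, Finset.sum_add_distrib, hS]; omega),
    zero_mul]
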